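/- Let A = (Q, Σ, δ, q₀, F) be a minimal partially ordered NFA, i.e., a poNFA with finite state set Q such that no poNFA with strictly fewer states accepts the language L(A). Then for every two distinct states q₁, q₂ ∈ Q, the languages L(_{q₁}A) and L(_{q₂}A) are different, where _qA denotes the NFA (Q, Σ, δ, q, F) obtained from A by taking q as the start state. -/

import Mathlib

/-- State `q` is reachable from state `p` in the NFA `M`:
there is a word `w` with `q ∈ δ(p, w)`. -/
def NFA.Reach {α σ : Type*} (M : NFA α σ) (p q : σ) : Prop :=
  ∃ w : List α, q ∈ M.evalFrom {p} w

/-- An NFA is *partially ordered* (a poNFA) if the reachability relation is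
antisymmetric, i.e., a partial order on the states. -/
def NFA.PartiallyOrdered {α σ : Type*} (M : NFA α σ) : Prop :=
  ∀ p q : σ, M.Reach p q → M.Reach q p → p = q

namespace PoNFAAux

variable {α : Type*} {σ τ : Type*}

lemma mem_evalFrom_iff (M : NFA α σ) :
    ∀ (w : List α) (S : Set σ) (q : σ),
      q ∈ M.evalFrom S w ↔ ∃ p ∈ S, q ∈ M.evalFrom {p} w := by
  intro w
  induction w with
  | nil => intro S q; simp
  | cons a w ih =>
    intro S q
    have h1 : M.evalFrom S (a :: w) = M.evalFrom (M.stepSet S a) w := rfl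
    rw [h1, ih]
    constructor
    · rintro ⟨r, hr, hq⟩
      rw [NFA.mem_stepSet] at hr
      obtain ⟨p, hp, hr⟩ := hr
      refine ⟨p, hp, ?_⟩
      have h2 : M.evalFrom {p} (a :: w) = M.evalFrom (M.stepSet {p} a) w := rfl
      rw [h2, ih]
      exact ⟨r, by rw [NFA.mem_stepSet]; exact ⟨p, rfl, hr⟩, hq⟩
    · rintro ⟨p, hp, hq⟩
      have h2 : M.evalFrom {p} (a :: w) = M.evalFrom (M.stepSet {p} a) w := rfl
      rw [h2, ih] at hq
      obtain ⟨r, hr, hq⟩ := hq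
      rw [NFA.mem_stepSet] at hr
      obtain ⟨t, ht, hr⟩ := hr
      rcases ht with rfl
      exact ⟨r, by rw [NFA.mem_stepSet]; exact ⟨t, hp, hr⟩, hq⟩

lemma mem_evalFrom_cons (M : NFA α σ) (p q : σ) (a : α) (w : List α) :
    q ∈ M.evalFrom {p} (a :: w) ↔ ∃ r ∈ M.step p a, q ∈ M.evalFrom {r} w := by
  have h2 : M.evalFrom {p} (a :: w) = M.evalFrom (M.stepSet {p} a) w := rfl
  have h3 : M.stepSet {p} a = M.step p a := by simp [NFA.stepSet]
  rw [h2, h3, mem_evalFrom_iff]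

lemma reach_refl (M : NFA α σ) (p : σ) : M.Reach p p := ⟨[], by simp⟩

lemma reach_trans {M : NFA α σ} {p q r : σ} (h1 : M.Reach p q) (h2 : M.Reach q r) :
    M.Reach p r := by
  obtain ⟨w1, h1⟩ := h1
  obtain ⟨w2, h2⟩ := h2
  refine ⟨w1 ++ w2, ?_⟩
  have h3 : M.evalFrom {p} (w1 ++ w2) = M.evalFrom (M.evalFrom {p} w1) w2 := by
    simp [NFA.evalFrom, List.foldl_append]
  rw [h3, mem_evalFrom_iff]
  exact ⟨q, h1, h2⟩

lemma reach_step {M : NFA α σ} {p q : σ} {a : α} (h : q ∈ M.step p a) : M.Reach p q :=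
  ⟨[a], by rw [mem_evalFrom_cons]; exact ⟨q, h, by simp⟩⟩

/-- acceptance from a single state -/
def Acc (M : NFA α σ) (p : σ) (w : List α) : Prop :=
  ∃ f ∈ M.accept, f ∈ M.evalFrom {p} w

lemma acc_nil {M : NFA α σ} {p : σ} : Acc M p [] ↔ p ∈ M.accept := by
  simp [Acc]

lemma acc_cons {M : NFA α σ} {p : σ} {a : α} {w : List α} :
    Acc M p (a :: w) ↔ ∃ r ∈ M.step p a, Acc M r w := by
  constructor
  · rintro ⟨f, hf, hev⟩
    rw [mem_evalFrom_cons] at hev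
    obtain ⟨r, hr, hev⟩ := hev
    exact ⟨r, hr, f, hf, hev⟩
  · rintro ⟨r, hr, f, hf, hev⟩
    exact ⟨f, hf, by rw [mem_evalFrom_cons]; exact ⟨r, hr, hev⟩⟩

lemma mem_accepts_iff {M : NFA α σ} {p₀ : σ} (h : M.start = {p₀}) (w : List α) :
    w ∈ M.accepts ↔ Acc M p₀ w := by
  show (∃ f ∈ M.accept, f ∈ M.evalFrom M.start w) ↔ _
  rw [h]; rfl

open Classical in
/-- redirect map: send `q1` to `q2`, leave everything else alone -/
noncomputable def rd (q1 q2 : σ) (hne : q2 ≠ q1) (s : σ) : {s : σ // s ≠ q1} :=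
  if h : s = q1 then ⟨q2, hne⟩ else ⟨s, h⟩

/-- the NFA obtained by deleting `q1` and redirecting transitions into `q1` to `q2` -/
noncomputable def merged (M : NFA α σ) (q1 q2 q₀ : σ) (hne : q2 ≠ q1) :
    NFA α {s : σ // s ≠ q1} where
  step p a := {v | v.1 ∈ M.step p.1 a ∨ (v.1 = q2 ∧ q1 ∈ M.step p.1 a)}
  start := {rd q1 q2 hne q₀}
  accept := {v | v.1 ∈ M.accept}

variable {M : NFA α σ} {q1 q2 : σ}

lemma acc_merged_of (q₀ : σ) (hne : q2 ≠ q1) (hL : ∀ w, Acc M q1 w ↔ Acc M q2 w) :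
    ∀ (w : List α) (p : σ) (hp : p ≠ q1),
      Acc M p w → Acc (merged M q1 q2 q₀ hne) ⟨p, hp⟩ w := by
  intro w
  induction w with
  | nil =>
    intro p hp h
    rw [acc_nil] at h ⊢
    exact h
  | cons a w ih =>
    intro p hp h
    rw [acc_cons] at h
    obtain ⟨r, hr, hacc⟩ := h
    rw [acc_cons]
    by_cases hr1 : r = q1
    · subst hr1
      have hacc2 : Acc M q2 w := (hL w).mp hacc
      exact ⟨⟨q2, hne⟩, Or.inr ⟨rfl, hr⟩, ih q2 hne hacc2⟩
    · exact ⟨⟨r, hr1⟩, Or.inl hr, ih r hr1 hacc⟩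

lemma acc_of_merged (q₀ : σ) (hne : q2 ≠ q1) (hL : ∀ w, Acc M q1 w ↔ Acc M q2 w) :
    ∀ (w : List α) (p : {s : σ // s ≠ q1}),
      Acc (merged M q1 q2 q₀ hne) p w → Acc M p.1 w := by
  intro w
  induction w with
  | nil =>
    intro p h
    rw [acc_nil] at h ⊢
    exact h
  | cons a w ih =>
    intro p h
    rw [acc_cons] at h
    obtain ⟨v, hv, hacc⟩ := h
    rw [acc_cons]
    rcases hv with hv | ⟨hv2, hv1⟩
    · exact ⟨v.1, hv, ih v hacc⟩
    · have : Acc M q2 w := hv2 ▸ ih v hacc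
      exact ⟨q1, hv1, (hL w).mpr this⟩

lemma reach_merged {q₀ : σ} {hne : q2 ≠ q1} :
    ∀ (w : List α) (p q : {s : σ // s ≠ q1}),
      q ∈ (merged M q1 q2 q₀ hne).evalFrom {p} w →
        M.Reach p.1 q.1 ∨ (M.Reach p.1 q1 ∧ M.Reach q2 q.1) := by
  intro w
  induction w with
  | nil =>
    intro p q h
    simp only [NFA.evalFrom_nil, Set.mem_singleton_iff] at h
    cases h
    exact Or.inl (reach_refl M _)
  | cons a w ih =>
    intro p q h
    rw [mem_evalFrom_cons] at h
    obtain ⟨v, hv, hq⟩ := h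
    rcases hv with hv | ⟨hv2, hv1⟩
    · rcases ih v q hq with h' | ⟨h1, h2⟩
      · exact Or.inl (reach_trans (reach_step hv) h')
      · exact Or.inr ⟨reach_trans (reach_step hv) h1, h2⟩
    · rcases ih v q hq with h' | ⟨h1, h2⟩
      · exact Or.inr ⟨reach_step hv1, hv2 ▸ h'⟩
      · exact Or.inr ⟨reach_step hv1, h2⟩

lemma merged_po {q₀ : σ} {hne : q2 ≠ q1} (hpo : M.PartiallyOrdered) (hq21 : ¬ M.Reach q2 q1) :
    (merged M q1 q2 q₀ hne).PartiallyOrdered := by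
  rintro p q ⟨w1, h1⟩ ⟨w2, h2⟩
  rcases reach_merged w1 p q h1 with hpq | ⟨hpq1, hq2q⟩ <;>
    rcases reach_merged w2 q p h2 with hqp | ⟨hqp1, hq2p⟩
  · exact Subtype.ext (hpo _ _ hpq hqp)
  · exact absurd (reach_trans hq2p (reach_trans hpq hqp1)) hq21
  · exact absurd (reach_trans hq2q (reach_trans hqp hpq1)) hq21
  · exact absurd (reach_trans hq2q hqp1) hq21

/-- transport an NFA along an equivalence of state types -/
def mapNFA (e : σ ≃ τ) (N : NFA α σ) : NFA α τ where
  step i a := {j | e.symm j ∈ N.step (e.symm i) a}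
  start := {j | e.symm j ∈ N.start}
  accept := {j | e.symm j ∈ N.accept}

lemma mapNFA_evalFrom (e : σ ≃ τ) (N : NFA α σ) :
    ∀ (w : List α) (p : σ) (q : τ),
      q ∈ (mapNFA e N).evalFrom {e p} w ↔ e.symm q ∈ N.evalFrom {p} w := by
  intro w
  induction w with
  | nil =>
    intro p q
    simp only [NFA.evalFrom_nil, Set.mem_singleton_iff]
    constructor
    · rintro rfl; simp
    · intro h; rw [← h]; simp
  | cons a w ih =>
    intro p q
    rw [mem_evalFrom_cons, mem_evalFrom_cons]
    constructor
    · rintro ⟨r, hr, hq⟩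
      refine ⟨e.symm r, ?_, ?_⟩
      · simpa [mapNFA] using hr
      · have := (ih (e.symm r) q).mp (by simpa using hq)
        exact this
    · rintro ⟨r, hr, hq⟩
      refine ⟨e r, ?_, ?_⟩
      · simp only [mapNFA, Set.mem_setOf_eq, Equiv.symm_apply_apply]
        exact hr
      · exact (ih r q).mpr hq

lemma mapNFA_acc (e : σ ≃ τ) (N : NFA α σ) (p : σ) (w : List α) :
    Acc (mapNFA e N) (e p) w ↔ Acc N p w := by
  constructor
  · rintro ⟨f, hf, hev⟩
    exact ⟨e.symm f, hf, (mapNFA_evalFrom e N w p f).mp hev⟩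
  · rintro ⟨f, hf, hev⟩
    refine ⟨e f, ?_, ?_⟩
    · simp only [mapNFA, Set.mem_setOf_eq, Equiv.symm_apply_apply]; exact hf
    · exact (mapNFA_evalFrom e N w p (e f)).mpr (by simpa using hev)

lemma mapNFA_po (e : σ ≃ τ) (N : NFA α σ) (h : N.PartiallyOrdered) :
    (mapNFA e N).PartiallyOrdered := by
  have key : ∀ i j : τ, (mapNFA e N).Reach i j → N.Reach (e.symm i) (e.symm j) := by
    rintro i j ⟨w, hw⟩
    refine ⟨w, ?_⟩
    have : j ∈ (mapNFA e N).evalFrom {e (e.symm i)} w := by simpa using hw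
    exact (mapNFA_evalFrom e N w (e.symm i) j).mp this
  intro i j h1 h2
  have := h _ _ (key i j h1) (key j i h2)
  exact e.symm.injective this

end PoNFAAux

open PoNFAAux in
/-- If `M` is a minimal poNFA (no poNFA with fewer states accepts `L(M)`), then for
any two distinct states `q₁ ≠ q₂` the languages of `M` started in `q₁`, resp. `q₂`,
differ. -/
theorem stmt_4 {α : Type} {σ : Type} [Fintype σ] (M : NFA α σ) (q₀ : σ)
    (hstart : M.start = {q₀}) (hpo : M.PartiallyOrdered)
    (hmin : ∀ (k : ℕ) (B : NFA α (Fin k)) (b₀ : Fin k), B.start = {b₀} →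
      B.PartiallyOrdered → B.accepts = M.accepts → Fintype.card σ ≤ k) :
    ∀ q₁ q₂ : σ, q₁ ≠ q₂ →
      ({ M with start := {q₁} } : NFA α σ).accepts ≠
        ({ M with start := {q₂} } : NFA α σ).accepts := by
  classical
  -- main construction, assuming WLOG `¬ M.Reach q2 q1`
  have key : ∀ q1 q2 : σ, q1 ≠ q2 → (∀ w, Acc M q1 w ↔ Acc M q2 w) →
      ¬ M.Reach q2 q1 → False := by
    intro q1 q2 hne hL hq21
    have hne' : q2 ≠ q1 := fun h => hne h.symm
    set N := merged M q1 q2 q₀ hne' with hN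
    set k := Fintype.card {s : σ // s ≠ q1} with hk
    let e : {s : σ // s ≠ q1} ≃ Fin k := Fintype.equivFin _
    set B := mapNFA e N with hB
    set b₀ := e (rd q1 q2 hne' q₀) with hb₀
    have hBstart : B.start = {b₀} := by
      ext j
      simp only [hB, mapNFA, hN, merged, Set.mem_setOf_eq, Set.mem_singleton_iff, hb₀]
      constructor
      · intro h; exact (e.symm_apply_eq).mp h
      · intro h; rw [h]; simp
    have hBpo : B.PartiallyOrdered :=
      mapNFA_po e N (merged_po hpo hq21)
    have hBacc : B.accepts = M.accepts := by
      ext w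
      rw [mem_accepts_iff hBstart, mem_accepts_iff hstart, hb₀, mapNFA_acc]
      constructor
      · intro h
        have h' := acc_of_merged q₀ hne' hL w _ h
        by_cases h0 : q₀ = q1
        · subst h0
          simp only [rd, dif_pos rfl] at h'
          exact (hL w).mpr h'
        · simpa only [rd, dif_neg h0] using h'
      · intro h
        by_cases h0 : q₀ = q1
        · subst h0
          have h2 : Acc M q2 w := (hL w).mp h
          have := acc_merged_of q₀ hne' hL w q2 hne' h2
          simpa only [rd, dif_pos rfl, dite_true] using this
        · have := acc_merged_of q₀ hne' hL w q₀ h0 h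
          simpa only [rd, dif_neg h0] using this
    have hcard := hmin k B b₀ hBstart hBpo hBacc
    have hklt : k < Fintype.card σ := by
      have : k = Fintype.card σ - 1 := by
        rw [hk]
        have : Fintype.card {s : σ // s ≠ q1} = Fintype.card σ - Fintype.card {s : σ // s = q1} :=
          Fintype.card_subtype_compl _
        rw [this, Fintype.card_subtype_eq]
      have hpos : 0 < Fintype.card σ := Fintype.card_pos_iff.mpr ⟨q1⟩
      omega
    omega
  intro q1 q2 hne hacc
  have hL : ∀ w, Acc M q1 w ↔ Acc M q2 w := by
    intro w
    have h1 : w ∈ ({ M with start := {q1} } : NFA α σ).accepts ↔ Acc M q1 w :=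
      mem_accepts_iff rfl w
    have h2 : w ∈ ({ M with start := {q2} } : NFA α σ).accepts ↔ Acc M q2 w :=
      mem_accepts_iff rfl w
    rw [← h1, ← h2, hacc]
  by_cases h21 : M.Reach q2 q1
  · have h12 : ¬ M.Reach q1 q2 := fun h12 => hne (hpo _ _ h12 h21)
    exact key q2 q1 (fun h => hne h.symm) (fun w => (hL w).symm) h12
  · exact key q1 q2 hne hL h21
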